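/- Suppose the probability measure P satisfies (1/2, b)-multiplicative expansion on X with 1 < b < 2. Then every measurable S ⊆ X with P(S ∩ Q_i) ≤ P(Q_i)/2 for all i satisfies P(N*(S) \ S) ≥ (b − 1)·P(S). -/
import Mathlib


open MeasureTheory Set

/-- `P` satisfies `(1/2, b)`-multiplicative expansion w.r.t. the class partition `Q` and the
neighborhood operation `Nbhd` on sets: for every class `i` and every measurable `S` with
`P_i(S) ≤ 1/2` one has `P_i(Nbhd S) ≥ min (b * P_i S) 1`, where `P_i(T) = P(T ∩ Q i)/P(Q i)`. -/
def MultiplicativeExpansion {X : Type*} [MeasurableSpace X] (P : Measure X)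
    {K : ℕ} (Q : Fin K → Set X) (Nbhd : Set X → Set X) (b : ℝ) : Prop :=
  ∀ i : Fin K, ∀ S : Set X, MeasurableSet S →
    (P (S ∩ Q i)).toReal / (P (Q i)).toReal ≤ 1 / 2 →
    (P (Nbhd S ∩ Q i)).toReal / (P (Q i)).toReal ≥
      min (b * ((P (S ∩ Q i)).toReal / (P (Q i)).toReal)) 1

/-- If `P` satisfies `(1/2, b)`-multiplicative expansion with `1 < b < 2`, then every measurable
`S` with `P (S ∩ Q i) ≤ P (Q i) / 2` for all `i` satisfies `P (N*(S) \ S) ≥ P S`. -/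
theorem constant_expansion_of_multiplicative_b_lt_two
    {X : Type*} [MeasurableSpace X] (P : Measure X) [IsProbabilityMeasure P]
    (K : ℕ) (hK : 1 ≤ K)
    (Gstar : X → Fin K) (hGstar : Measurable Gstar)
    (Q : Fin K → Set X) (hQ : ∀ i, Q i = {x | Gstar x = i})
    (hQpos : ∀ i, 0 < P (Q i))
    (N : X → Set X) (hNmeas : ∀ x, MeasurableSet (N x))
    (Nbhd : Set X → Set X) (hNbhd : ∀ S : Set X, Nbhd S = ⋃ x ∈ S, N x)
    (Nstar : Set X → Set X)
    (hNstar : ∀ S : Set X, Nstar S = ⋃ i : Fin K, (Nbhd (S ∩ Q i) ∩ Q i))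
    (hNbhdMeas : ∀ S : Set X, MeasurableSet S → MeasurableSet (Nbhd S))
    (hNstarMeas : ∀ S : Set X, MeasurableSet S → MeasurableSet (Nstar S))
    (b : ℝ) (hb1 : 1 < b) (hb2 : b < 2)
    (hexp : MultiplicativeExpansion P Q Nbhd b)
    (S : Set X) (hS : MeasurableSet S)
    (hhalf : ∀ i : Fin K, (P (S ∩ Q i)).toReal ≤ (P (Q i)).toReal / 2) :
    (P (Nstar S \ S)).toReal ≥ (b - 1) * (P S).toReal := by

  have hQmeas : ∀ i, MeasurableSet (Q i) := by
    intro i; rw [hQ]; exact hGstar (measurableSet_singleton i)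
  have hQdisj : Pairwise (Function.onFun Disjoint Q) := by
    intro i j hij
    simp only [Function.onFun, hQ, Set.disjoint_left]
    intro x hx hx'
    exact hij (hx.symm.trans hx')
  have hQunion : (⋃ i, Q i) = univ := by
    ext x; simp [hQ]
  set A : Fin K → Set X := fun i => Nbhd (S ∩ Q i) ∩ Q i with hA
  have hAmeas : ∀ i, MeasurableSet (A i) := fun i =>
    (hNbhdMeas _ (hS.inter (hQmeas i))).inter (hQmeas i)
  have hfin : ∀ T : Set X, P T ≠ ⊤ := fun T => measure_ne_top P T
  have key : ∀ i, (P (A i)).toReal ≥ b * (P (S ∩ Q i)).toReal := by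
    intro i
    have hq : 0 < (P (Q i)).toReal := ENNReal.toReal_pos (hQpos i).ne' (hfin _)
    have hr : (P (S ∩ Q i)).toReal / (P (Q i)).toReal ≤ 1 / 2 := by
      rw [div_le_div_iff₀ hq (by norm_num)]
      linarith [hhalf i]
    have hS' : MeasurableSet (S ∩ Q i) := hS.inter (hQmeas i)
    have e : (S ∩ Q i) ∩ Q i = S ∩ Q i := by rw [inter_assoc, inter_self]
    have h := hexp i (S ∩ Q i) hS' (by rw [e]; exact hr)
    rw [e] at h
    have hrpos : 0 ≤ (P (S ∩ Q i)).toReal / (P (Q i)).toReal :=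
      div_nonneg ENNReal.toReal_nonneg hq.le
    have hmin : min (b * ((P (S ∩ Q i)).toReal / (P (Q i)).toReal)) 1
        = b * ((P (S ∩ Q i)).toReal / (P (Q i)).toReal) := by
      apply min_eq_left
      nlinarith
    rw [hmin] at h
    rw [ge_iff_le, ← div_le_div_iff_of_pos_right hq, mul_div_assoc]
    exact h
  have step : ∀ i, (P (A i \ S)).toReal ≥ (b - 1) * (P (S ∩ Q i)).toReal := by
    intro i
    have hsub : A i ⊆ (A i \ S) ∪ (S ∩ Q i) := by
      intro x hx
      by_cases hxS : x ∈ S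
      · exact Or.inr ⟨hxS, hx.2⟩
      · exact Or.inl ⟨hx, hxS⟩
    have hle : P (A i) ≤ P (A i \ S) + P (S ∩ Q i) :=
      le_trans (measure_mono hsub) (measure_union_le _ _)
    have hle' : (P (A i)).toReal ≤ (P (A i \ S)).toReal + (P (S ∩ Q i)).toReal := by
      rw [← ENNReal.toReal_add (hfin _) (hfin _)]
      exact ENNReal.toReal_mono (by finiteness) hle
    have := key i
    have hnn : 0 ≤ (P (S ∩ Q i)).toReal := ENNReal.toReal_nonneg
    nlinarith
  have hsum1 : (P (Nstar S \ S)).toReal = ∑ i, (P (A i \ S)).toReal := by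
    have hset : Nstar S \ S = ⋃ i, (A i \ S) := by
      rw [hNstar, iUnion_diff]
    have hd : Pairwise (Function.onFun Disjoint (fun i => A i \ S)) := by
      intro i j hij
      exact (hQdisj hij).mono (fun x hx => hx.1.2) (fun x hx => hx.1.2)
    rw [hset, measure_iUnion hd (fun i => (hAmeas i).diff hS), tsum_fintype,
      ENNReal.toReal_sum (fun i _ => hfin _)]
  have hsum2 : (P S).toReal = ∑ i, (P (S ∩ Q i)).toReal := by
    have hset : S = ⋃ i, S ∩ Q i := by
      rw [← inter_iUnion, hQunion, inter_univ]
    have hd : Pairwise (Function.onFun Disjoint (fun i => S ∩ Q i)) := by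
      intro i j hij
      exact (hQdisj hij).mono (fun x hx => hx.2) (fun x hx => hx.2)
    conv_lhs => rw [hset]
    rw [measure_iUnion hd (fun i => hS.inter (hQmeas i)), tsum_fintype,
      ENNReal.toReal_sum (fun i _ => hfin _)]
  rw [hsum1, hsum2, Finset.mul_sum]
  exact Finset.sum_le_sum (fun i _ => step i)
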